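/- If n is an odd perfect number with smallest prime factor p₁, then H(n) ≤ 2 + 9/(4 p₁²). -/

import Mathlib

set_option maxHeartbeats 1000000

open Real Finset

/-- `H n = ∏_{p ∣ n} p/(p-1)` over the distinct prime divisors of `n`. -/
noncomputable def H (n : ℕ) : ℝ := ∏ p ∈ n.primeFactors, (p : ℝ) / ((p : ℝ) - 1)

lemma cube_sum_bound (A : Finset ℕ) (hodd : ∀ a ∈ A, Odd a) (m : ℕ) (hm : 3 ≤ m)
    (hge : ∀ a ∈ A, m ≤ a) :
    ∑ a ∈ A, 1 / (a : ℝ) ^ 3 ≤ 1 / (4 * ((m : ℝ) - 2) * m) := by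
  induction A using Finset.strongInduction generalizing m with
  | _ s ih =>
    have hmR : (3 : ℝ) ≤ (m : ℝ) := by exact_mod_cast hm
    rcases s.eq_empty_or_nonempty with rfl | hs
    · simp only [Finset.sum_empty]
      apply le_of_lt
      apply div_pos one_pos
      nlinarith
    · set b := s.min' hs with hb
      have hbs : b ∈ s := s.min'_mem hs
      have hbm : m ≤ b := hge b hbs
      have hbR : (3 : ℝ) ≤ (b : ℝ) := le_trans hmR (by exact_mod_cast hbm)
      have hrest : ∀ a ∈ s.erase b, b + 2 ≤ a := by
        intro a ha
        have hane : a ≠ b := (Finset.mem_erase.mp ha).1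
        have has : a ∈ s := (Finset.mem_erase.mp ha).2
        have h1 : b ≤ a := s.min'_le a has
        obtain ⟨k, hk⟩ := hodd a has
        obtain ⟨l, hl⟩ := hodd b hbs
        omega
      have hIH := ih (s.erase b) (Finset.erase_ssubset hbs)
        (fun a ha => hodd a (Finset.mem_erase.mp ha).2) (b + 2) (by omega) hrest
      rw [← Finset.add_sum_erase s _ hbs]
      have hcast : ((b + 2 : ℕ) : ℝ) = (b : ℝ) + 2 := by push_cast; ring
      rw [hcast] at hIH
      have hb0 : (0:ℝ) < (b:ℝ) := by linarith
      have key : 1 / (b : ℝ) ^ 3 + 1 / (4 * ((b : ℝ) + 2 - 2) * ((b : ℝ) + 2))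
          ≤ 1 / (4 * ((m : ℝ) - 2) * (m : ℝ)) := by
        have hbmR : (m : ℝ) ≤ (b : ℝ) := by exact_mod_cast hbm
        have hx : (0:ℝ) < (b:ℝ)^3 := by positivity
        have hy : (0:ℝ) < 4 * ((b:ℝ) + 2 - 2) * ((b:ℝ) + 2) := by nlinarith
        have hz : (0:ℝ) < 4 * ((b:ℝ) - 2) * (b:ℝ) := by nlinarith
        have hw : (0:ℝ) < 4 * ((m:ℝ) - 2) * (m:ℝ) := by nlinarith
        have h1 : 1 / (b : ℝ) ^ 3 + 1 / (4 * ((b:ℝ) + 2 - 2) * ((b:ℝ) + 2))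
            ≤ 1 / (4 * ((b : ℝ) - 2) * (b : ℝ)) := by
          rw [div_add_div _ _ (ne_of_gt hx) (ne_of_gt hy), div_le_div_iff₀ (by positivity) hz]
          nlinarith [hb0, sq_nonneg ((b:ℝ))]
        have h2 : 1 / (4 * ((b : ℝ) - 2) * (b : ℝ)) ≤ 1 / (4 * ((m : ℝ) - 2) * (m : ℝ)) := by
          apply one_div_le_one_div_of_le hw
          nlinarith
        linarith
      linarith

lemma one_sub_sum_le_prod (s : Finset ℕ) (f : ℕ → ℝ) (h0 : ∀ i ∈ s, 0 ≤ f i)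
    (h1 : ∀ i ∈ s, f i ≤ 1) : 1 - ∑ i ∈ s, f i ≤ ∏ i ∈ s, (1 - f i) := by
  induction s using Finset.induction with
  | empty => simp
  | @insert a s' hx ih =>
    rw [Finset.sum_insert hx, Finset.prod_insert hx]
    have h0a := h0 a (mem_insert_self a s')
    have h1a := h1 a (mem_insert_self a s')
    have ih' := ih (fun i hi => h0 i (mem_insert_of_mem hi)) (fun i hi => h1 i (mem_insert_of_mem hi))
    have hsum : 0 ≤ ∑ i ∈ s', f i := Finset.sum_nonneg fun i hi => h0 i (mem_insert_of_mem hi)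
    have hp : 0 ≤ ∏ i ∈ s', (1 - f i) :=
      Finset.prod_nonneg fun i hi => by linarith [h1 i (mem_insert_of_mem hi)]
    nlinarith

theorem stmt_2 (n : ℕ) (hodd : Odd n) (hperf : Nat.Perfect n) :
    H n ≤ 2 + 9 / (4 * (n.minFac : ℝ) ^ 2) := by
  classical
  have hn0 : 0 < n := hperf.2
  have hσ : ∑ d ∈ n.divisors, d = 2 * n := (Nat.perfect_iff_sum_divisors_eq_two_mul hn0).mp hperf
  have hn1 : n ≠ 1 := by
    rintro rfl
    simp [Nat.divisors_one] at hσ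
  set P := n.primeFactors with hP
  set g : ℕ → ℕ := fun p => ∑ k ∈ Finset.range (n.factorization p + 1), p ^ k with hg
  have hprod2 : 2 * n = ∏ p ∈ P, g p := by
    rw [← hσ]
    exact Nat.sum_divisors hn0.ne'
  have hself : n = ∏ p ∈ P, p ^ n.factorization p := by
    conv_lhs => rw [← Nat.factorization_prod_pow_eq_self hn0.ne']
    rfl
  -- basic facts on primes dividing n
  have hodd_p : ∀ p ∈ P, Odd p := by
    intro p hp
    rcases Nat.even_or_odd p with he | ho
    · exfalso
      have h2 : 2 ∣ p := he.two_dvd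
      have : 2 ∣ n := h2.trans (Nat.dvd_of_mem_primeFactors hp)
      exact (Nat.not_odd_iff_even.mpr (even_iff_two_dvd.mpr this)) hodd
    · exact ho
  have hp3 : ∀ p ∈ P, 3 ≤ p := by
    intro p hp
    have := (Nat.prime_of_mem_primeFactors hp).two_le
    obtain ⟨k, hk⟩ := hodd_p p hp
    omega
  have ha1 : ∀ p ∈ P, 1 ≤ n.factorization p := by
    intro p hp
    have : n.factorization p ≠ 0 := by
      rw [← Finsupp.mem_support_iff, Nat.support_factorization]
      exact hp
    omega
  set r := n.minFac with hr
  have hrP : r ∈ P := Nat.mem_primeFactors.mpr ⟨Nat.minFac_prime hn1, Nat.minFac_dvd n, hn0.ne'⟩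
  have hr3 : 3 ≤ r := hp3 r hrP
  have hrle : ∀ p ∈ P, r ≤ p :=
    fun p hp => Nat.minFac_le_of_dvd (Nat.prime_of_mem_primeFactors hp).two_le
      (Nat.dvd_of_mem_primeFactors hp)
  -- parity of g p
  have hgeven : ∀ p ∈ P, Odd (n.factorization p) → 2 ∣ g p := by
    intro p hp hop
    have hmod : g p % 2 = (n.factorization p + 1) % 2 := by
      rw [hg]
      simp only
      rw [Finset.sum_nat_mod]
      have : ∀ k ∈ Finset.range (n.factorization p + 1), p ^ k % 2 = 1 := by
        intro k _
        exact Nat.odd_iff.mp ((hodd_p p hp).pow)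
      rw [Finset.sum_congr rfl this]
      simp
    obtain ⟨l, hl⟩ := hop
    omega
  -- at most one prime with odd exponent
  have huniq : ∀ p ∈ P, ∀ q ∈ P, Odd (n.factorization p) → Odd (n.factorization q) → p = q := by
    intro p hp q hq hop hoq
    by_contra hne
    have hdvd : g p * g q ∣ 2 * n := by
      rw [hprod2, ← Finset.mul_prod_erase _ _ hp]
      exact mul_dvd_mul_left (g p)
        (Finset.dvd_prod_of_mem _ (Finset.mem_erase.mpr ⟨fun h => hne (h.symm), hq⟩))
    obtain ⟨u, hu⟩ := hgeven p hp hop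
    obtain ⟨v, hv⟩ := hgeven q hq hoq
    obtain ⟨c, hc⟩ := hdvd
    obtain ⟨k, hk⟩ := hodd
    have hw : 2 * n = 4 * (u * v * c) := by rw [hc, hu, hv]; ring
    omega
  -- a prime with exponent 1 is at least 2r - 1
  have hbig : ∀ p ∈ P, n.factorization p = 1 → 2 * r - 1 ≤ p := by
    intro p hp h1
    have hdvd : g p ∣ 2 * n := by
      rw [hprod2]
      exact Finset.dvd_prod_of_mem _ hp
    have hgp : g p = p + 1 := by
      rw [hg]
      simp only [h1]
      rw [Finset.sum_range_succ, Finset.sum_range_one]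
      ring
    obtain ⟨u, hu⟩ := hodd_p p hp
    have hdvd' : p + 1 ∣ 2 * n := hgp ▸ hdvd
    have h2u : 2 * (u + 1) ∣ 2 * n := by
      rwa [show 2 * (u + 1) = p + 1 by omega]
    have hun : (u + 1) ∣ n := (Nat.mul_dvd_mul_iff_left (by norm_num : 0 < 2)).mp h2u
    have hu2 : 2 ≤ u + 1 := by
      have := hp3 p hp
      omega
    have := Nat.minFac_le_of_dvd hu2 hun
    omega
  -- real side
  have hnR : (0:ℝ) < (n:ℝ) := by exact_mod_cast hn0
  have hpR : ∀ p ∈ P, (3:ℝ) ≤ (p:ℝ) := fun p hp => by exact_mod_cast hp3 p hp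
  have hR : (2:ℝ) = ∏ p ∈ P, ((g p : ℝ) / (p:ℝ) ^ (n.factorization p)) := by
    have h1 : (2:ℝ) * (n:ℝ) = ∏ p ∈ P, (g p : ℝ) := by exact_mod_cast congrArg (Nat.cast (R := ℝ)) hprod2
    have h2 : (n:ℝ) = ∏ p ∈ P, (p:ℝ) ^ (n.factorization p) := by exact_mod_cast congrArg (Nat.cast (R := ℝ)) hself
    rw [Finset.prod_div_distrib, ← h1, ← h2]
    field_simp
  have hfac : ∀ p ∈ P, (g p : ℝ) / (p:ℝ) ^ (n.factorization p)
      = ((p:ℝ) / ((p:ℝ) - 1)) * (1 - (1/(p:ℝ)) ^ (n.factorization p + 1)) := by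
    intro p hp
    have h3 := hpR p hp
    have h0 : (p:ℝ) ≠ 0 := by linarith
    have h1 : (p:ℝ) ≠ 1 := by linarith
    have h2 : (p:ℝ) - 1 ≠ 0 := by linarith
    have hgcast : (g p : ℝ) = ∑ k ∈ Finset.range (n.factorization p + 1), (p:ℝ)^k := by
      rw [hg]
      push_cast
      rfl
    rw [hgcast, geom_sum_eq h1, div_pow, one_pow]
    have hppow : ((p:ℝ))^(n.factorization p + 1) ≠ 0 := by positivity
    field_simp
    ring
  set t : ℕ → ℝ := fun p => (1/(p:ℝ))^(n.factorization p + 1) with ht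
  have hHT : (2:ℝ) = H n * ∏ p ∈ P, (1 - t p) := by
    rw [hR, Finset.prod_congr rfl hfac, Finset.prod_mul_distrib]
    rfl
  have ht0 : ∀ p ∈ P, 0 ≤ t p := by
    intro p hp
    have := hpR p hp
    positivity
  have ht1 : ∀ p ∈ P, t p ≤ 1 := by
    intro p hp
    have h3 := hpR p hp
    apply pow_le_one₀ (by positivity)
    rw [div_le_one (by linarith)]
    linarith
  set S := ∑ p ∈ P, t p with hS
  have hTS : 1 - S ≤ ∏ p ∈ P, (1 - t p) := one_sub_sum_le_prod P t ht0 ht1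
  have hH0 : 0 ≤ H n := by
    apply Finset.prod_nonneg
    intro p hp
    have := hpR p hp
    apply div_nonneg <;> linarith
  -- cube sums
  have hcube_erase : ∑ p ∈ P.erase r, 1/(p:ℝ)^3 ≤ 1/(4*(r:ℝ)*((r:ℝ)+2)) := by
    have hkey := cube_sum_bound (P.erase r) (fun a ha => hodd_p a (Finset.mem_erase.mp ha).2)
      (r+2) (by omega)
      (fun a ha => by
        have h1 := hrle a (Finset.mem_erase.mp ha).2
        have h2 := (Finset.mem_erase.mp ha).1
        obtain ⟨k, hk⟩ := hodd_p a (Finset.mem_erase.mp ha).2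
        obtain ⟨l, hl⟩ := hodd_p r hrP
        omega)
    have hc2 : ((r + 2 : ℕ) : ℝ) = (r:ℝ) + 2 := by push_cast; ring
    rw [hc2] at hkey
    have : 4*((r:ℝ) + 2 - 2)*((r:ℝ)+2) = 4*(r:ℝ)*((r:ℝ)+2) := by ring
    rwa [this] at hkey
  -- nonspecial primes have small contribution
  have hts : ∀ p ∈ P, ¬ Odd (n.factorization p) → t p ≤ 1/(p:ℝ)^3 := by
    intro p hp hnodd
    have h3 := hpR p hp
    have ha := ha1 p hp
    have h31 : 3 ≤ n.factorization p + 1 := by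
      rcases Nat.even_or_odd (n.factorization p) with he | ho
      · obtain ⟨k, hk⟩ := he
        omega
      · exact absurd ho hnodd
    have : t p ≤ (1/(p:ℝ))^3 := by
      apply pow_le_pow_of_le_one (by positivity) _ h31
      rw [div_le_one (by linarith)]
      linarith
    calc t p ≤ (1/(p:ℝ))^3 := this
      _ = 1/(p:ℝ)^3 := by rw [div_pow, one_pow]
  have h2r1 : (0:ℝ) < 2*(r:ℝ) - 1 := by
    have : (3:ℝ) ≤ (r:ℝ) := by exact_mod_cast hr3
    linarith
  -- main bound on S
  have hSbound : S ≤ 1/(2*(r:ℝ)-1)^2 + ∑ p ∈ P, 1/(p:ℝ)^3 := by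
    have hcubenn : ∀ p ∈ P, (0:ℝ) ≤ 1/(p:ℝ)^3 := by
      intro p hp
      have := hpR p hp
      positivity
    by_cases hex : ∃ q ∈ P, Odd (n.factorization q)
    · obtain ⟨q, hqP, hq⟩ := hex
      have hq3 := hpR q hqP
      have hSsplit : S = t q + ∑ p ∈ P.erase q, t p := (Finset.add_sum_erase P t hqP).symm
      have hCsplit : ∑ p ∈ P, 1/(p:ℝ)^3 = 1/(q:ℝ)^3 + ∑ p ∈ P.erase q, 1/(p:ℝ)^3 :=
        (Finset.add_sum_erase P _ hqP).symm
      have hrest : ∑ p ∈ P.erase q, t p ≤ ∑ p ∈ P.erase q, 1/(p:ℝ)^3 := by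
        apply Finset.sum_le_sum
        intro p hp
        apply hts p (Finset.mem_erase.mp hp).2
        intro ho
        exact (Finset.mem_erase.mp hp).1 (huniq p (Finset.mem_erase.mp hp).2 q hqP ho hq)
      have htq : t q ≤ 1/(2*(r:ℝ)-1)^2 + 1/(q:ℝ)^3 := by
        rcases eq_or_lt_of_le (ha1 q hqP) with h1 | h1
        · -- exponent 1
          have hbigq := hbig q hqP h1.symm
          have hqR : 2*(r:ℝ) - 1 ≤ (q:ℝ) := by
            have : ((2*r - 1 : ℕ) : ℝ) ≤ (q:ℝ) := by exact_mod_cast hbigq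
            have hc : ((2*r - 1 : ℕ) : ℝ) = 2*(r:ℝ) - 1 := by
              have : 1 ≤ 2*r := by omega
              push_cast [Nat.cast_sub this]
              ring
            linarith [hc ▸ this]
          have ha' : n.factorization q = 1 := h1.symm
          have htqval : t q = 1/(q:ℝ)^2 := by
            show (1/(q:ℝ)) ^ (n.factorization q + 1) = 1/(q:ℝ)^2
            rw [ha', div_pow, one_pow]
          rw [htqval]
          have : 1/(q:ℝ)^2 ≤ 1/(2*(r:ℝ)-1)^2 := by
            apply one_div_le_one_div_of_le (by positivity)
            nlinarith
          have hq3nn : (0:ℝ) ≤ 1/(q:ℝ)^3 := by positivity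
          linarith
        · -- odd exponent ≥ 3
          have h31 : 3 ≤ n.factorization q + 1 := by
            obtain ⟨l, hl⟩ := hq
            omega
          have : t q ≤ (1/(q:ℝ))^3 := by
            apply pow_le_pow_of_le_one (by positivity) _ h31
            rw [div_le_one (by linarith)]
            linarith
          have h2 : (0:ℝ) ≤ 1/(2*(r:ℝ)-1)^2 := by positivity
          calc t q ≤ (1/(q:ℝ))^3 := this
            _ = 1/(q:ℝ)^3 := by rw [div_pow, one_pow]
            _ ≤ 1/(2*(r:ℝ)-1)^2 + 1/(q:ℝ)^3 := by linarith
      rw [hSsplit, hCsplit]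
      linarith
    · push_neg at hex
      have : S ≤ ∑ p ∈ P, 1/(p:ℝ)^3 := Finset.sum_le_sum (fun p hp => hts p hp (hex p hp))
      have h2 : (0:ℝ) ≤ 1/(2*(r:ℝ)-1)^2 := by positivity
      linarith
  -- assemble
  set x : ℝ := (r : ℝ) with hx
  have hx3 : (3:ℝ) ≤ x := by rw [hx]; exact_mod_cast hr3
  have hCsplit : ∑ p ∈ P, 1/(p:ℝ)^3 = 1/x^3 + ∑ p ∈ P.erase r, 1/(p:ℝ)^3 :=
    (Finset.add_sum_erase P _ hrP).symm
  have hSfin : S ≤ 1/(2*x-1)^2 + 1/x^3 + 1/(4*x*(x+2)) := by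
    rw [hCsplit] at hSbound
    linarith [hcube_erase]
  have harith : 1/(2*x-1)^2 + 1/x^3 + 1/(4*x*(x+2)) ≤ 9/(8*x^2+9) := by
    have hy : (0:ℝ) ≤ x - 3 := by linarith
    have hA : (0:ℝ) < (2*x-1)^2 := by nlinarith
    have hB : (0:ℝ) < x^3 := by positivity
    have hC : (0:ℝ) < 4*x*(x+2) := by nlinarith
    have hD : (0:ℝ) < 8*x^2+9 := by positivity
    rw [div_add_div _ _ (ne_of_gt hA) (ne_of_gt hB), div_add_div _ _ (by positivity) (ne_of_gt hC),
      div_le_div_iff₀ (by positivity) hD]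
    nlinarith [pow_nonneg hy 7, pow_nonneg hy 6, pow_nonneg hy 5, pow_nonneg hy 4,
      pow_nonneg hy 3, sq_nonneg (x-3), hy, hx3]
  have hS9 : S ≤ 9/(8*x^2+9) := le_trans hSfin harith
  have hden : (0:ℝ) < 8*x^2+9 := by positivity
  have h1S : 8*x^2/(8*x^2+9) ≤ 1 - S := by
    have : 8*x^2/(8*x^2+9) = 1 - 9/(8*x^2+9) := by
      field_simp
      ring
    rw [this]
    linarith
  have hfinal : H n * (8*x^2/(8*x^2+9)) ≤ 2 := by
    have step1 : H n * (1 - S) ≤ H n * ∏ p ∈ P, (1 - t p) := mul_le_mul_of_nonneg_left hTS hH0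
    have step2 : H n * (8*x^2/(8*x^2+9)) ≤ H n * (1 - S) := mul_le_mul_of_nonneg_left h1S hH0
    linarith [hHT ▸ step1]
  have hc : (0:ℝ) < 8*x^2/(8*x^2+9) := by positivity
  have := (le_div_iff₀ hc).mpr hfinal
  have heq : 2 / (8*x^2/(8*x^2+9)) = 2 + 9/(4*x^2) := by
    rw [div_div_eq_mul_div]
    field_simp
    ring
  rw [heq] at this
  exact this
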